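/- Let k be a field with char k ≠ 2 and Λ the exterior algebra on 8 generators with Lefschetz element w. Then multiplication by w from the degree-3 component to the degree-5 component is a bijection (both components have dimension C(8,3) = C(8,5) = 56). -/

import Mathlib

open ExteriorAlgebra

namespace Stmt2Aux

variable (k : Type*) [Field k]

noncomputable abbrev ee (i : Fin 8) : Fin 8 → k := Pi.single i 1

noncomputable abbrev th (i : Fin 8) : ExteriorAlgebra k (Fin 8 → k) := ι k (ee k i)

noncomputable abbrev dl (i : Fin 8) : Module.Dual k (Fin 8 → k) := LinearMap.proj i

noncomputable abbrev cc (i : Fin 8) :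
    ExteriorAlgebra k (Fin 8 → k) →ₗ[k] ExteriorAlgebra k (Fin 8 → k) :=
  CliffordAlgebra.contractLeft (dl k i)

lemma cc_ι_mul (i : Fin 8) (m : Fin 8 → k) (x : ExteriorAlgebra k (Fin 8 → k)) :
    cc k i (ι k m * x) = m i • x - ι k m * cc k i x :=
  CliffordAlgebra.contractLeft_ι_mul _ _ _

lemma cc_ι (i : Fin 8) (m : Fin 8 → k) :
    cc k i (ι k m) = algebraMap k _ (m i) :=
  CliffordAlgebra.contractLeft_ι _ _ _

lemma cc_algebraMap (i : Fin 8) (r : k) :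
    cc k i (algebraMap k (ExteriorAlgebra k (Fin 8 → k)) r) = 0 :=
  CliffordAlgebra.contractLeft_algebraMap _ _ _

lemma th_mul_ι (i : Fin 8) (m : Fin 8 → k) :
    th k i * ι k m = -(ι k m * th k i) :=
  eq_neg_of_add_eq_zero_left (ι_add_mul_swap _ _)

noncomputable def Eop : ExteriorAlgebra k (Fin 8 → k) →ₗ[k] ExteriorAlgebra k (Fin 8 → k) :=
  ∑ i : Fin 8, (LinearMap.mulLeft k (th k i)) ∘ₗ cc k i

lemma Eop_apply (x) : Eop k x = ∑ i : Fin 8, th k i * cc k i x := by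
  simp [Eop]

lemma sum_smul_th (m : Fin 8 → k) : ∑ i : Fin 8, m i • th k i = ι k m := by
  have h : ∀ i : Fin 8, m i • th k i = ι k (Pi.single i (m i)) := by
    intro i
    rw [← map_smul]
    congr 1
    rw [← Pi.single_smul, smul_eq_mul, mul_one]
  simp_rw [h, ← map_sum, Finset.univ_sum_single]

lemma Eop_ι_mul (m : Fin 8 → k) (x : ExteriorAlgebra k (Fin 8 → k)) :
    Eop k (ι k m * x) = ι k m * x + ι k m * Eop k x := by
  rw [Eop_apply, Eop_apply]
  calc ∑ i : Fin 8, th k i * cc k i (ι k m * x)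
      = ∑ i : Fin 8, (m i • (th k i * x) + ι k m * (th k i * cc k i x)) := by
        refine Finset.sum_congr rfl fun i _ => ?_
        rw [cc_ι_mul, mul_sub, mul_smul_comm, ← mul_assoc, th_mul_ι, neg_mul, mul_assoc,
          sub_neg_eq_add]
    _ = ι k m * x + ι k m * ∑ i : Fin 8, th k i * cc k i x := by
        rw [Finset.sum_add_distrib, Finset.mul_sum]
        congr 1
        simp_rw [← smul_mul_assoc]
        rw [← Finset.sum_mul, sum_smul_th]

lemma euler : ∀ (n : ℕ), ∀ x ∈ ⋀[k]^n (Fin 8 → k), Eop k x = (n : k) • x := by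
  intro n
  induction n with
  | zero =>
    intro x hx
    replace hx : x ∈ (LinearMap.range (ι k : (Fin 8 → k) →ₗ[k] ExteriorAlgebra k (Fin 8 → k)))^0 := hx
    rw [pow_zero] at hx
    obtain ⟨r, rfl⟩ := Submodule.mem_one.mp hx
    rw [Eop_apply]
    simp [cc_algebraMap]
  | succ n ih =>
    intro x hx
    rw [← ιMulti_span_fixedDegree] at hx
    induction hx using Submodule.span_induction with
    | mem x hx =>
      obtain ⟨v, rfl⟩ := hx
      rw [ιMulti_succ_apply]
      have hy : ιMulti k n (Matrix.vecTail v) ∈ ⋀[k]^n (Fin 8 → k) :=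
        ιMulti_range k n (Set.mem_range_self _)
      rw [Eop_ι_mul, ih _ hy, mul_smul_comm]
      push_cast
      rw [add_smul, one_smul, add_comm]
    | zero => simp
    | add a b _ _ ha hb => rw [map_add, ha, hb, smul_add]
    | smul r a _ ha => rw [map_smul, ha, smul_comm]

lemma cc_mem : ∀ (n : ℕ) (i : Fin 8), ∀ x ∈ ⋀[k]^(n+1) (Fin 8 → k),
    cc k i x ∈ ⋀[k]^n (Fin 8 → k) := by
  intro n
  induction n with
  | zero =>
    intro i x hx
    replace hx : x ∈ (LinearMap.range (ι k : (Fin 8 → k) →ₗ[k] ExteriorAlgebra k (Fin 8 → k)))^(0+1) := hx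
    rw [zero_add, pow_one] at hx
    obtain ⟨m, rfl⟩ := hx
    rw [cc_ι]
    show _ ∈ (LinearMap.range (ι k : (Fin 8 → k) →ₗ[k] ExteriorAlgebra k (Fin 8 → k)))^0
    rw [pow_zero]
    exact Submodule.mem_one.mpr ⟨_, rfl⟩
  | succ n ih =>
    intro i x hx
    rw [← ιMulti_span_fixedDegree] at hx
    induction hx using Submodule.span_induction with
    | mem x hx =>
      obtain ⟨v, rfl⟩ := hx
      rw [ιMulti_succ_apply, cc_ι_mul]
      have hy : ιMulti k (n+1) (Matrix.vecTail v) ∈ ⋀[k]^(n+1) (Fin 8 → k) :=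
        ιMulti_range k (n+1) (Set.mem_range_self _)
      refine sub_mem (Submodule.smul_mem _ _ hy) ?_
      have h1 : ι k (v 0) ∈ ⋀[k]^1 (Fin 8 → k) := by
        show _ ∈ (LinearMap.range (ι k : (Fin 8 → k) →ₗ[k] ExteriorAlgebra k (Fin 8 → k)))^1
        rw [pow_one]; exact Set.mem_range_self _
      have := SetLike.mul_mem_graded h1 (ih i _ hy)
      rwa [Nat.add_comm 1 n] at this
    | zero => simp
    | add a b _ _ ha hb => rw [map_add]; exact add_mem ha hb
    | smul r a _ ha => rw [map_smul]; exact Submodule.smul_mem _ _ ha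


noncomputable def Lam : ExteriorAlgebra k (Fin 8 → k) →ₗ[k] ExteriorAlgebra k (Fin 8 → k) :=
  cc k 1 ∘ₗ cc k 0 + cc k 3 ∘ₗ cc k 2 + cc k 5 ∘ₗ cc k 4 + cc k 7 ∘ₗ cc k 6

noncomputable def ww : ExteriorAlgebra k (Fin 8 → k) :=
  th k 0 * th k 1 + th k 2 * th k 3 + th k 4 * th k 5 + th k 6 * th k 7


lemma cc_th_mul_ne (i a : Fin 8) (h : i ≠ a) (x : ExteriorAlgebra k (Fin 8 → k)) :
    cc k i (th k a * x) = -(th k a * cc k i x) := by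
  rw [cc_ι_mul, show ee k a i = 0 from Pi.single_eq_of_ne h 1, zero_smul, zero_sub]

lemma cc_th_mul_eq (a : Fin 8) (x : ExteriorAlgebra k (Fin 8 → k)) :
    cc k a (th k a * x) = x - th k a * cc k a x := by
  rw [cc_ι_mul, show ee k a a = 1 from Pi.single_eq_same a 1, one_smul]

lemma offdiag (p q a b : Fin 8) (hpa : p ≠ a) (hpb : p ≠ b) (hqa : q ≠ a) (hqb : q ≠ b)
    (x : ExteriorAlgebra k (Fin 8 → k)) :
    cc k q (cc k p (th k a * (th k b * x))) = th k a * (th k b * cc k q (cc k p x)) := by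
  simp only [cc_th_mul_ne k p a hpa, cc_th_mul_ne k p b hpb, cc_th_mul_ne k q a hqa,
    cc_th_mul_ne k q b hqb, map_neg, mul_neg, neg_neg]

lemma diag (p q : Fin 8) (hpq : p ≠ q) (x : ExteriorAlgebra k (Fin 8 → k)) :
    cc k q (cc k p (th k p * (th k q * x))) =
      x - th k q * cc k q x - th k p * cc k p x + th k p * (th k q * cc k q (cc k p x)) := by
  simp only [cc_th_mul_eq, cc_th_mul_ne k p q hpq, cc_th_mul_ne k q p hpq.symm, map_neg,
    map_add, map_sub, mul_neg, mul_sub, neg_neg, sub_neg_eq_add]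
  abel

lemma comm_lemma (x : ExteriorAlgebra k (Fin 8 → k)) :
    Lam k (ww k * x) = (4:k) • x - Eop k x + ww k * Lam k x := by
  have e4 : (4:k) • x = x + x + x + x := by
    have : (4:k) = 1+1+1+1 := by norm_num
    rw [this, add_smul, add_smul, add_smul, one_smul]
  simp only [Lam, ww, Eop_apply, Fin.sum_univ_eight, LinearMap.add_apply, LinearMap.comp_apply,
    add_mul, mul_add, map_add, mul_assoc, e4]
  rw [diag k 0 1 (by decide), diag k 2 3 (by decide), diag k 4 5 (by decide), diag k 6 7 (by decide),
    offdiag k 0 1 2 3 (by decide) (by decide) (by decide) (by decide),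
    offdiag k 0 1 4 5 (by decide) (by decide) (by decide) (by decide),
    offdiag k 0 1 6 7 (by decide) (by decide) (by decide) (by decide),
    offdiag k 2 3 0 1 (by decide) (by decide) (by decide) (by decide),
    offdiag k 2 3 4 5 (by decide) (by decide) (by decide) (by decide),
    offdiag k 2 3 6 7 (by decide) (by decide) (by decide) (by decide),
    offdiag k 4 5 0 1 (by decide) (by decide) (by decide) (by decide),
    offdiag k 4 5 2 3 (by decide) (by decide) (by decide) (by decide),
    offdiag k 4 5 6 7 (by decide) (by decide) (by decide) (by decide),
    offdiag k 6 7 0 1 (by decide) (by decide) (by decide) (by decide),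
    offdiag k 6 7 2 3 (by decide) (by decide) (by decide) (by decide),
    offdiag k 6 7 4 5 (by decide) (by decide) (by decide) (by decide)]
  abel

lemma Lam_ι (m : Fin 8 → k) : Lam k (ι k m) = 0 := by
  simp [Lam, cc_ι, cc_algebraMap]


lemma mul_algebraMap_eq_smul (r : k) (x : ExteriorAlgebra k (Fin 8 → k)) :
    x * algebraMap k _ r = r • x := by
  rw [← Algebra.commutes, ← Algebra.smul_def]

lemma lam_pair01 (m : Fin 8 → k) :
    cc k 1 (cc k 0 (ww k * ι k m)) = ι k m - m 1 • th k 1 - m 0 • th k 0 := by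
  simp only [ww, add_mul, mul_assoc, map_add]
  rw [diag k 0 1 (by decide),
    offdiag k 0 1 2 3 (by decide) (by decide) (by decide) (by decide),
    offdiag k 0 1 4 5 (by decide) (by decide) (by decide) (by decide),
    offdiag k 0 1 6 7 (by decide) (by decide) (by decide) (by decide)]
  simp only [cc_ι, cc_algebraMap, mul_zero, add_zero, mul_algebraMap_eq_smul]

lemma lam_pair23 (m : Fin 8 → k) :
    cc k 3 (cc k 2 (ww k * ι k m)) = ι k m - m 3 • th k 3 - m 2 • th k 2 := by
  simp only [ww, add_mul, mul_assoc, map_add]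
  rw [diag k 2 3 (by decide),
    offdiag k 2 3 0 1 (by decide) (by decide) (by decide) (by decide),
    offdiag k 2 3 4 5 (by decide) (by decide) (by decide) (by decide),
    offdiag k 2 3 6 7 (by decide) (by decide) (by decide) (by decide)]
  simp only [cc_ι, cc_algebraMap, mul_zero, add_zero, mul_algebraMap_eq_smul]
  abel

lemma w_mul_ι_eq_zero (m : Fin 8 → k) (h : ww k * ι k m = 0) : m = 0 := by
  have h1 := lam_pair01 k m
  have h2 := lam_pair23 k m
  rw [h, map_zero, map_zero] at h1 h2
  replace h1 := h1.symm
  replace h2 := h2.symm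
  rw [sub_sub, sub_eq_zero] at h1 h2
  have e1 : ι k (m 1 • ee k 1 + m 0 • ee k 0) = m 1 • th k 1 + m 0 • th k 0 := by
    simp only [map_add, map_smul]
  have e2 : ι k (m 3 • ee k 3 + m 2 • ee k 2) = m 3 • th k 3 + m 2 • th k 2 := by
    simp only [map_add, map_smul]
  have hm1 : m = m 1 • ee k 1 + m 0 • ee k 0 := (ι_inj k _ _).mp (h1.trans e1.symm)
  have hm2 : m = m 3 • ee k 3 + m 2 • ee k 2 := (ι_inj k _ _).mp (h2.trans e2.symm)
  funext l
  fin_cases l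
  · simpa using congrFun hm2 0
  · simpa using congrFun hm2 1
  · simpa using congrFun hm1 2
  · simpa using congrFun hm1 3
  · simpa using congrFun hm1 4
  · simpa using congrFun hm1 5
  · simpa using congrFun hm1 6
  · simpa using congrFun hm1 7

lemma mem1 (m : Fin 8 → k) : ι k m ∈ ⋀[k]^1 (Fin 8 → k) := by
  show _ ∈ (LinearMap.range (ι k : (Fin 8 → k) →ₗ[k] ExteriorAlgebra k (Fin 8 → k)))^1
  rw [pow_one]; exact Set.mem_range_self _

lemma mem2 : ww k ∈ ⋀[k]^2 (Fin 8 → k) := by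
  have h : ∀ a b : Fin 8, th k a * th k b ∈ ⋀[k]^2 (Fin 8 → k) := by
    intro a b
    have := SetLike.mul_mem_graded (A := fun n => ⋀[k]^n (Fin 8 → k))
      (mem1 k (ee k a)) (mem1 k (ee k b))
    norm_num at this
    exact this
  exact add_mem (add_mem (add_mem (h 0 1) (h 2 3)) (h 4 5)) (h 6 7)

lemma w_mul_mem3 {x : ExteriorAlgebra k (Fin 8 → k)} (hx : x ∈ ⋀[k]^3 (Fin 8 → k)) :
    ww k * x ∈ ⋀[k]^5 (Fin 8 → k) := by
  have := SetLike.mul_mem_graded (A := fun n => ⋀[k]^n (Fin 8 → k)) (mem2 k) hx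
  norm_num at this
  exact this

lemma w_mul_mem1 {x : ExteriorAlgebra k (Fin 8 → k)} (hx : x ∈ ⋀[k]^1 (Fin 8 → k)) :
    ww k * x ∈ ⋀[k]^3 (Fin 8 → k) := by
  have := SetLike.mul_mem_graded (A := fun n => ⋀[k]^n (Fin 8 → k)) (mem2 k) hx
  norm_num at this
  exact this

lemma Lam_apply (x : ExteriorAlgebra k (Fin 8 → k)) :
    Lam k x = cc k 1 (cc k 0 x) + cc k 3 (cc k 2 x) + cc k 5 (cc k 4 x) + cc k 7 (cc k 6 x) := by
  simp [Lam]

lemma Lam_mem3 {x : ExteriorAlgebra k (Fin 8 → k)} (hx : x ∈ ⋀[k]^3 (Fin 8 → k)) :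
    Lam k x ∈ ⋀[k]^1 (Fin 8 → k) := by
  rw [Lam_apply]
  have h : ∀ p q : Fin 8, cc k q (cc k p x) ∈ ⋀[k]^1 (Fin 8 → k) := fun p q =>
    cc_mem k 1 q _ (cc_mem k 2 p x hx)
  exact add_mem (add_mem (add_mem (h 0 1) (h 2 3)) (h 4 5)) (h 6 7)

lemma inj3 (h2 : (2:k) ≠ 0) {x : ExteriorAlgebra k (Fin 8 → k)}
    (hx : x ∈ ⋀[k]^3 (Fin 8 → k)) (hwx : ww k * x = 0) : x = 0 := by
  have h4 : (4:k) ≠ 0 := by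
    have : (4:k) = 2 * 2 := by norm_num
    rw [this]; exact mul_ne_zero h2 h2
  obtain ⟨m, hm⟩ : ∃ m, ι k m = Lam k x := by
    have hy := Lam_mem3 k hx
    replace hy : Lam k x ∈ (LinearMap.range (ι k : (Fin 8 → k) →ₗ[k] ExteriorAlgebra k (Fin 8 → k)))^1 := hy
    rw [pow_one] at hy
    exact hy
  have hcomm := comm_lemma k x
  rw [hwx, map_zero, euler k 3 x hx, ← hm] at hcomm
  have h43 : (4:k) • x - ((3:ℕ):k) • x = x := by
    rw [← sub_smul]; norm_num
  rw [h43] at hcomm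
  -- hcomm : 0 = x + ww k * ι k m
  have hx_eq : x = -(ww k * ι k m) := by
    rw [eq_neg_iff_add_eq_zero]
    exact hcomm.symm
  have hww : ww k * (ww k * ι k m) = 0 := by
    have : ww k * x = -(ww k * (ww k * ι k m)) := by rw [hx_eq, mul_neg]
    rw [hwx] at this
    exact (neg_eq_zero.mp this.symm)
  -- compute Lam (ww * ι m) = 3 • ι m
  have hLwι : Lam k (ww k * ι k m) = (3:k) • ι k m := by
    have := comm_lemma k (ι k m)
    rw [Lam_ι, mul_zero, add_zero, euler k 1 _ (mem1 k m)] at this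
    rw [this, ← sub_smul]
    norm_num
  have hkey := comm_lemma k (ww k * ι k m)
  rw [hww, map_zero, euler k 3 _ (w_mul_mem1 k (mem1 k m)), hLwι] at hkey
  -- hkey : 0 = 4 • (ww * ι m) - 3 • (ww * ι m) + ww * (3 • ι m)
  have : (0:ExteriorAlgebra k (Fin 8 → k)) = (4:k) • (ww k * ι k m) := by
    rw [hkey, mul_smul_comm]
    have h43' : (4:k) • (ww k * ι k m) - ((3:ℕ):k) • (ww k * ι k m) = ww k * ι k m := by
      rw [← sub_smul]; norm_num
    rw [h43']
    have : (4:k) = 1 + 3 := by norm_num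
    rw [this, add_smul, one_smul]
  have hw0 : ww k * ι k m = 0 := by
    have := this.symm
    exact (smul_eq_zero.mp this).resolve_left h4
  have hm0 := w_mul_ι_eq_zero k m hw0
  rw [hx_eq, hw0, neg_zero]

lemma sum_smul_ee (m : Fin 8 → k) : ∑ j : Fin 8, m j • ee k j = m := by
  have h : ∀ j : Fin 8, m j • ee k j = Pi.single j (m j) := by
    intro j; rw [← Pi.single_smul, smul_eq_mul, mul_one]
  simp_rw [h]
  exact Finset.univ_sum_single m

/-- the wedge of basis vectors indexed by a sorted subset -/
noncomputable def eps (n : ℕ) (s : {s : Finset (Fin 8) // s.card = n}) :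
    ExteriorAlgebra k (Fin 8 → k) :=
  ιMulti k n fun i => ee k (s.1.orderIsoOfFin s.2 i)

lemma eps_mem (n : ℕ) (s) : eps k n s ∈ ⋀[k]^n (Fin 8 → k) :=
  ιMulti_range k n (Set.mem_range_self _)

lemma span_eps (n : ℕ) :
    Submodule.span k (Set.range (eps k n)) = ⋀[k]^n (Fin 8 → k) := by
  refine le_antisymm (Submodule.span_le.2 ?_) ?_
  · rintro _ ⟨s, rfl⟩; exact eps_mem k n s
  rw [← ιMulti_span_fixedDegree]
  refine Submodule.span_le.2 ?_
  rintro _ ⟨v, rfl⟩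
  have hv : (ιMulti k n) v = (ιMulti k n) fun i => ∑ j : Fin 8, v i j • ee k j := by
    congr 1; funext i; rw [sum_smul_ee]
  rw [hv]
  rw [show ((ιMulti k n) fun i => ∑ j : Fin 8, v i j • ee k j)
      = (ιMulti k n).toMultilinearMap fun i => ∑ j : Fin 8, v i j • ee k j from rfl,
    MultilinearMap.map_sum]
  refine Submodule.sum_mem _ fun r _ => ?_
  rw [MultilinearMap.map_smul_univ]
  refine Submodule.smul_mem _ _ ?_
  by_cases hr : Function.Injective r
  · -- r is injective; its image is a card-n subset
    set s : Finset (Fin 8) := Finset.image r Finset.univ with hs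
    have hcard : s.card = n := by
      rw [hs, Finset.card_image_of_injective _ hr, Finset.card_univ, Fintype.card_fin]
    set t : {s : Finset (Fin 8) // s.card = n} := ⟨s, hcard⟩ with ht
    have hmem : ∀ i, r i ∈ s := fun i => Finset.mem_image_of_mem r (Finset.mem_univ i)
    set g : Fin n → Fin n := fun i => (s.orderIsoOfFin hcard).symm ⟨r i, hmem i⟩ with hg
    have hginj : Function.Injective g := by
      intro a b hab
      simp only [hg] at hab
      exact hr (Subtype.ext_iff.mp ((s.orderIsoOfFin hcard).symm.injective hab))
    have hgbij : Function.Bijective g := (Finite.injective_iff_bijective).mp hginj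
    set σ : Equiv.Perm (Fin n) := Equiv.ofBijective g hgbij with hσ
    have hcomp : (fun i => ee k ((s.orderIsoOfFin hcard) i : Fin 8)) ∘ σ
        = fun i => ee k (r i) := by
      funext i
      simp only [Function.comp_apply, hσ, Equiv.ofBijective_apply, hg,
        OrderIso.apply_symm_apply]
    have hperm := AlternatingMap.map_perm (ιMulti k n)
      (fun i => ee k ((s.orderIsoOfFin hcard) i : Fin 8)) σ
    rw [hcomp] at hperm
    have heq : (ιMulti k n).toMultilinearMap (fun i => ee k (r i))
        = Equiv.Perm.sign σ • eps k n t := hperm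
    rw [heq]
    rcases Int.units_eq_one_or (Equiv.Perm.sign σ) with h1 | h1
    · rw [h1, one_smul]
      exact Submodule.subset_span (Set.mem_range_self t)
    · rw [h1]
      rw [Units.neg_smul, one_smul]
      exact Submodule.neg_mem _ (Submodule.subset_span (Set.mem_range_self t))
  · obtain ⟨a, b, hab, hne⟩ := Function.not_injective_iff.mp hr
    have h0 : (ιMulti k n) (fun i => ee k (r i)) = 0 :=
      AlternatingMap.map_eq_zero_of_eq _ (fun i => ee k (r i)) (by simp only [hab]) hne
    rw [show (ιMulti k n).toMultilinearMap (fun i => ee k (r i))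
      = ιMulti k n (fun i => ee k (r i)) from rfl, h0]
    exact Submodule.zero_mem _

/-- projection onto the coordinates of a sorted subset -/
noncomputable def projS (n : ℕ) (s : {s : Finset (Fin 8) // s.card = n}) :
    (Fin 8 → k) →ₗ[k] (Fin n → k) :=
  LinearMap.funLeft k k (fun a : Fin n => ((s.1.orderIsoOfFin s.2 a : Fin 8)))

/-- determinant functional -/
noncomputable def phiS (n : ℕ) (s : {s : Finset (Fin 8) // s.card = n}) :
    (Fin 8 → k) [⋀^Fin n]→ₗ[k] k :=
  (Matrix.detRowAlternating : (Fin n → k) [⋀^Fin n]→ₗ[k] k).compLinearMap (projS k n s)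

noncomputable def PhiS (n : ℕ) (s : {s : Finset (Fin 8) // s.card = n}) :
    ExteriorAlgebra k (Fin 8 → k) →ₗ[k] k :=
  liftAlternating (Function.update (fun i => (0 : (Fin 8 → k) [⋀^Fin i]→ₗ[k] k)) n (phiS k n s))

lemma PhiS_ιMulti (n : ℕ) (s) (v : Fin n → Fin 8 → k) :
    PhiS k n s (ιMulti k n v) = phiS k n s v := by
  rw [PhiS, liftAlternating_apply_ιMulti, Function.update_self]

lemma PhiS_eps (n : ℕ) (s t : {s : Finset (Fin 8) // s.card = n}) :
    PhiS k n s (eps k n t) = if s = t then 1 else 0 := by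
  rw [eps, PhiS_ιMulti]
  show Matrix.det (Matrix.of fun a b => ee k ((t.1.orderIsoOfFin t.2 a : Fin 8))
    ((s.1.orderIsoOfFin s.2 b : Fin 8))) = _
  split_ifs with hst
  · subst hst
    have : (Matrix.of fun a b => ee k ((s.1.orderIsoOfFin s.2 a : Fin 8))
        ((s.1.orderIsoOfFin s.2 b : Fin 8))) = (1 : Matrix (Fin n) (Fin n) k) := by
      ext a b
      simp only [ee]
      rw [Matrix.of_apply, Matrix.one_apply, Pi.single_apply]
      by_cases hab : a = b
      · subst hab; simp
      · have hne : ((s.1.orderIsoOfFin s.2 b : Fin 8)) ≠ ((s.1.orderIsoOfFin s.2 a : Fin 8)) := by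
          intro hc
          exact hab ((s.1.orderIsoOfFin s.2).injective (Subtype.ext hc)).symm
        rw [if_neg hne, if_neg hab]
    rw [this, Matrix.det_one]
  · -- pick an element of s not in t
    have hsub : ¬ (s.1 ⊆ t.1) := by
      intro hsub
      exact hst (Subtype.ext (Finset.eq_of_subset_of_card_le hsub (by rw [s.2, t.2])))
    obtain ⟨j, hjs, hjt⟩ := Finset.not_subset.mp hsub
    set b : Fin n := (s.1.orderIsoOfFin s.2).symm ⟨j, hjs⟩ with hb
    apply Matrix.det_eq_zero_of_column_eq_zero b
    intro a
    simp only [ee]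
    rw [Matrix.of_apply, Pi.single_apply, if_neg]
    intro hc
    apply hjt
    have : ((s.1.orderIsoOfFin s.2 b : Fin 8)) = j := by
      rw [hb, OrderIso.apply_symm_apply]
    rw [this] at hc
    rw [hc]
    exact (t.1.orderIsoOfFin t.2 a).2

lemma eps_indep (n : ℕ) : LinearIndependent k (eps k n) := by
  apply LinearIndependent.of_comp (LinearMap.pi (fun s => PhiS k n s))
  have hcomp : (⇑(LinearMap.pi (fun s => PhiS k n s)
      : ExteriorAlgebra k (Fin 8 → k) →ₗ[k] ({s : Finset (Fin 8) // s.card = n} → k))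
      ∘ eps k n) = fun t => Pi.single t 1 := by
    funext t
    funext s
    simp only [Function.comp_apply, LinearMap.pi_apply, PhiS_eps, Pi.single_apply]
  rw [hcomp]
  refine Fintype.linearIndependent_iff.mpr fun g hg s => ?_
  have h : ∀ t, g t • (Pi.single t 1 : {s : Finset (Fin 8) // s.card = n} → k)
      = Pi.single t (g t) := by
    intro t; rw [← Pi.single_smul, smul_eq_mul, mul_one]
  rw [show (∑ t, g t • (Pi.single t 1 : {s : Finset (Fin 8) // s.card = n} → k))
    = ∑ t, Pi.single t (g t) from Finset.sum_congr rfl fun t _ => h t,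
    Finset.univ_sum_single] at hg
  exact congrFun hg s

lemma finrank_power (n : ℕ) :
    Module.finrank k (⋀[k]^n (Fin 8 → k)) = Nat.choose 8 n := by
  rw [← span_eps k n, finrank_span_eq_card (eps_indep k n), Fintype.card_finset_len,
    Fintype.card_fin]

instance fd_power (n : ℕ) : FiniteDimensional k (⋀[k]^n (Fin 8 → k)) := by
  rw [← span_eps k n]
  exact FiniteDimensional.span_of_finite k (Set.toFinite _)

noncomputable def Lmap : (⋀[k]^3 (Fin 8 → k)) →ₗ[k] (⋀[k]^5 (Fin 8 → k)) :=
  LinearMap.codRestrict _ ((LinearMap.mulLeft k (ww k)).comp (Submodule.subtype _))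
    (fun x => w_mul_mem3 k x.2)

lemma Lmap_injective (h2 : (2:k) ≠ 0) : Function.Injective (Lmap k) := by
  rw [← LinearMap.ker_eq_bot, LinearMap.ker_eq_bot']
  intro x hx
  have hval : ww k * (x : ExteriorAlgebra k (Fin 8 → k)) = 0 := by
    have := congrArg (Subtype.val) hx
    exact this
  exact Subtype.ext (inj3 k h2 x.2 hval)

lemma Lmap_surjective (h2 : (2:k) ≠ 0) : Function.Surjective (Lmap k) := by
  have heq : Module.finrank k (⋀[k]^3 (Fin 8 → k)) = Module.finrank k (⋀[k]^5 (Fin 8 → k)) := by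
    rw [finrank_power, finrank_power]
    norm_num [Nat.choose]
  exact (LinearMap.injective_iff_surjective_of_finrank_eq_finrank heq).mp (Lmap_injective k h2)

end Stmt2Aux

open Stmt2Aux

/-- Let `k` be a field with `char k ≠ 2` and `Λ` the exterior algebra on 8 generators with
Lefschetz element `w`.  Then multiplication by `w` from the degree-3 component to the
degree-5 component is a bijection, and both components have dimension `C(8,3) = C(8,5) = 56`. -/
theorem stmt_2 (k : Type*) [Field k] (hchar : (ringChar k) ≠ 2)
    (θ : Fin 8 → ExteriorAlgebra k (Fin 8 → k))
    (hθ : ∀ i, θ i = ExteriorAlgebra.ι k (Pi.single i 1))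
    (w : ExteriorAlgebra k (Fin 8 → k))
    (hw : w = θ 0 * θ 1 + θ 2 * θ 3 + θ 4 * θ 5 + θ 6 * θ 7) :
    (∀ x ∈ ⋀[k]^3 (Fin 8 → k), w * x ∈ ⋀[k]^5 (Fin 8 → k) ∧ (w * x = 0 → x = 0)) ∧
    (∀ y ∈ ⋀[k]^5 (Fin 8 → k), ∃ x ∈ ⋀[k]^3 (Fin 8 → k), w * x = y) ∧
    Module.finrank k (⋀[k]^3 (Fin 8 → k)) = Nat.choose 8 3 ∧
    Module.finrank k (⋀[k]^5 (Fin 8 → k)) = Nat.choose 8 5 ∧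
    Nat.choose 8 3 = 56 ∧ Nat.choose 8 5 = 56 := by
  have h2 : (2:k) ≠ 0 := by
    intro h0
    have hc : ringChar k ∣ 2 := by
      have := ringChar.charP k
      exact (CharP.cast_eq_zero_iff k (ringChar k) 2).mp (by exact_mod_cast h0)
    rcases (Nat.prime_two.eq_one_or_self_of_dvd _ hc) with h1 | h1
    · exact CharP.ringChar_ne_one h1
    · exact hchar h1
  have hwww : w = ww k := by
    rw [hw, ww, hθ, hθ, hθ, hθ, hθ, hθ, hθ, hθ]
  subst hwww
  refine ⟨fun x hx => ⟨w_mul_mem3 k hx, fun h0 => inj3 k h2 hx h0⟩, fun y hy => ?_, ?_, ?_, ?_, ?_⟩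

  · obtain ⟨x, hx⟩ := Lmap_surjective k h2 ⟨y, hy⟩
    exact ⟨x, x.2, congrArg Subtype.val hx⟩
  · exact finrank_power k 3
  · exact finrank_power k 5
  · norm_num [Nat.choose]
  · norm_num [Nat.choose]
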